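/- (The divergence of a solution of the massive wave equation satisfies a Klein–Gordon equation; equation (3.12) of the paper in abstract form.) If A, j ∈ V₁ satisfy the wave equation (P + Q + m²·id) A = j + (1/m²)·Q j for a real m > 0, then the element δ₁ A − (1/m²)·δ₁ j of V₀ satisfies the Klein–Gordon equation (δ₁ ∘ d₀ + m²·id)(δ₁ A − (1/m²)·δ₁ j) = 0. -/

import Mathlib

/-- The divergence of a solution of the massive wave equation satisfies a
Klein–Gordon equation; equation (3.12) of the paper in abstract form. -/
theorem divergence_satisfies_klein_gordon
    (V₀ V₁ V₂ : Type*)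
    [AddCommGroup V₀] [Module ℂ V₀]
    [AddCommGroup V₁] [Module ℂ V₁]
    [AddCommGroup V₂] [Module ℂ V₂]
    (d₀ : V₀ →ₗ[ℂ] V₁) (d₁ : V₁ →ₗ[ℂ] V₂)
    (δ₁ : V₁ →ₗ[ℂ] V₀) (δ₂ : V₂ →ₗ[ℂ] V₁)
    (hdd : d₁ ∘ₗ d₀ = 0) (hδδ : δ₁ ∘ₗ δ₂ = 0)
    (P Q : V₁ →ₗ[ℂ] V₁)
    (hP : P = δ₂ ∘ₗ d₁) (hQ : Q = d₀ ∘ₗ δ₁)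
    (m : ℝ) (hm : 0 < m) (A j : V₁)
    (hwave : (P + Q + ((m : ℂ) ^ 2) • (LinearMap.id : V₁ →ₗ[ℂ] V₁)) A
      = j + (1 / (m : ℂ) ^ 2) • Q j) :
    (δ₁ ∘ₗ d₀ + ((m : ℂ) ^ 2) • (LinearMap.id : V₀ →ₗ[ℂ] V₀))
      (δ₁ A - (1 / (m : ℂ) ^ 2) • δ₁ j) = 0 := by
  have hm2 : (m : ℂ) ^ 2 ≠ 0 :=
    pow_ne_zero 2 (Complex.ofReal_ne_zero.mpr hm.ne')
  have hPA : δ₁ (P A) = 0 := by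
    rw [hP]
    exact congrArg (· (d₁ A)) hδδ
  have h := congrArg δ₁ hwave
  have hmc : (m : ℂ) ^ 2 * (1 / (m : ℂ) ^ 2) = 1 := mul_one_div_cancel hm2
  simp only [hQ, LinearMap.add_apply, LinearMap.smul_apply, LinearMap.id_apply,
    LinearMap.comp_apply, map_add, map_sub, map_smul, smul_sub, smul_smul, hmc,
    one_smul, hPA, zero_add] at h ⊢
  linear_combination (norm := match_scalars <;> field_simp [Complex.ofReal_ne_zero.mpr hm.ne'] <;> ring) h
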